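/- Let r = 2m+1 be odd and ℓ ∈ ℝ^r a generic length vector with nonnegative weakly increasing components. Then μ(ℓ) = m+1 if and only if ℓ is equivalent to (1,...,1), i.e., a subset J ⊆ {1,...,r} is ℓ-long if and only if #J ≥ m+1. -/

import Mathlib

open Finset

/-- `J` is `ℓ`-long if the sum of `ℓ` over `J` exceeds the sum over its complement. -/
def IsLong {r : ℕ} (ℓ : Fin r → ℝ) (J : Finset (Fin r)) : Prop :=
  ∑ j ∈ Jᶜ, ℓ j < ∑ j ∈ J, ℓ j

/-- `ℓ` is generic if no subset sum equals the complementary sum. -/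
def IsGeneric {r : ℕ} (ℓ : Fin r → ℝ) : Prop :=
  ∀ J : Finset (Fin r), ∑ j ∈ J, ℓ j ≠ ∑ j ∈ Jᶜ, ℓ j

open scoped Classical in
/-- `σ_ℓ(J)`: the number of `j ∈ J` such that `J \ {j}` is `ℓ`-short. -/
noncomputable def sigmaL {r : ℕ} (ℓ : Fin r → ℝ) (J : Finset (Fin r)) : ℕ :=
  (J.filter (fun j => ¬ IsLong ℓ (J.erase j))).card

/-- `μ(ℓ) = min { σ_ℓ(J) : J ℓ-long, σ_ℓ(J) > 0 }`. -/
noncomputable def muL {r : ℕ} (ℓ : Fin r → ℝ) : ℕ :=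
  sInf {n : ℕ | 0 < n ∧ ∃ J : Finset (Fin r), IsLong ℓ J ∧ sigmaL ℓ J = n}

lemma long_of_not_long_compl {r : ℕ} {ℓ : Fin r → ℝ} (hg : IsGeneric ℓ)
    {J : Finset (Fin r)} (h : ¬ IsLong ℓ Jᶜ) : IsLong ℓ J := by
  unfold IsLong at *
  rw [compl_compl] at h
  push_neg at h
  exact h.lt_of_ne (hg J).symm

lemma not_long_compl_of_long {r : ℕ} {ℓ : Fin r → ℝ}
    {J : Finset (Fin r)} (h : IsLong ℓ J) : ¬ IsLong ℓ Jᶜ := by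
  unfold IsLong at *
  rw [compl_compl]
  linarith

theorem mu_eq_succ_iff_equilateral_odd {r m : ℕ} (hr : r = 2 * m + 1)
    (ℓ : Fin r → ℝ) (hg : IsGeneric ℓ) (hpos : ∀ j, 0 ≤ ℓ j)
    (hmono : Monotone ℓ) :
    muL ℓ = m + 1 ↔ ∀ J : Finset (Fin r), IsLong ℓ J ↔ m + 1 ≤ J.card := by
  classical
  have hcard_univ : (univ : Finset (Fin r)).card = r := by simp
  have huniv : IsLong ℓ (univ : Finset (Fin r)) := by
    have h0 := hg ∅
    simp only [sum_empty, compl_empty] at h0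
    unfold IsLong
    simp only [compl_univ, sum_empty]
    exact lt_of_le_of_ne (sum_nonneg fun j _ => hpos j) h0
  constructor
  · intro hmu
    -- minimal cardinality of a long set
    set S : Set ℕ := {n | ∃ J : Finset (Fin r), IsLong ℓ J ∧ J.card = n} with hS
    have hSne : S.Nonempty := ⟨r, univ, huniv, hcard_univ⟩
    obtain ⟨K, hKlong, hKcard⟩ := Nat.sInf_mem hSne
    set k := sInf S with hk
    have hmin : ∀ J : Finset (Fin r), IsLong ℓ J → k ≤ J.card := fun J hJ =>
      Nat.sInf_le ⟨J, hJ, rfl⟩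
    have hkpos : 0 < k := by
      rcases Nat.eq_zero_or_pos k with h0 | h
      · exfalso
        have : K = ∅ := card_eq_zero.mp (by rw [hKcard, h0])
        subst this
        unfold IsLong at hKlong
        simp only [sum_empty, compl_empty] at hKlong
        exact absurd hKlong (not_lt.mpr (sum_nonneg fun j _ => hpos j))
      · exact h
    -- σ(K) = k
    have hsig : sigmaL ℓ K = k := by
      unfold sigmaL
      rw [filter_eq_self.mpr, hKcard]
      intro j hj
      intro hlong
      have := hmin _ hlong
      rw [card_erase_of_mem hj, hKcard] at this
      omega
    have hmule : muL ℓ ≤ k := Nat.sInf_le ⟨hkpos, K, hKlong, hsig⟩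
    -- k ≤ m + 1
    have hkle : k ≤ m + 1 := by
      obtain ⟨J, _, hJcard⟩ := exists_subset_card_eq (s := (univ : Finset (Fin r))) (n := m + 1)
        (by rw [hcard_univ]; omega)
      by_cases hJ : IsLong ℓ J
      · exact hJcard ▸ hmin J hJ
      · have hJc : IsLong ℓ Jᶜ := long_of_not_long_compl hg (by rwa [compl_compl])
        have := hmin _ hJc
        rw [card_compl, hJcard, Fintype.card_fin] at this
        omega
    have hkeq : k = m + 1 := by omega
    intro J
    constructor
    · intro hJ
      have := hmin J hJ
      omega
    · intro hJ
      apply long_of_not_long_compl hg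
      intro hJc
      have := hmin _ hJc
      rw [card_compl, Fintype.card_fin] at this
      have hJr : J.card ≤ r := by simpa using card_le_card (subset_univ J)
      omega
  · intro h
    have hTeq : {n : ℕ | 0 < n ∧ ∃ J : Finset (Fin r), IsLong ℓ J ∧ sigmaL ℓ J = n}
        = {m + 1} := by
      ext n
      simp only [Set.mem_setOf_eq, Set.mem_singleton_iff]
      constructor
      · rintro ⟨hn, J, hJ, hsig⟩
        have hJcard : m + 1 ≤ J.card := (h J).mp hJ
        rcases eq_or_lt_of_le hJcard with heq | hlt
        · -- card J = m+1, σ = m+1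
          subst hsig
          unfold sigmaL
          rw [filter_eq_self.mpr, ← heq]
          intro j hj hlong
          have := (h _).mp hlong
          rw [card_erase_of_mem hj, ← heq] at this
          omega
        · -- card J > m+1, σ = 0, contradicting 0 < n
          exfalso
          have : sigmaL ℓ J = 0 := by
            unfold sigmaL
            rw [filter_eq_empty_iff.mpr, card_empty]
            intro j hj
            simp only [not_not]
            apply (h _).mpr
            rw [card_erase_of_mem hj]
            omega
          omega
      · rintro rfl
        refine ⟨Nat.succ_pos m, ?_⟩
        obtain ⟨J, _, hJcard⟩ := exists_subset_card_eq (s := (univ : Finset (Fin r))) (n := m + 1)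
          (by rw [hcard_univ]; omega)
        have hJ : IsLong ℓ J := (h J).mpr (le_of_eq hJcard.symm)
        refine ⟨J, hJ, ?_⟩
        unfold sigmaL
        rw [filter_eq_self.mpr, hJcard]
        intro j hj hlong
        have := (h _).mp hlong
        rw [card_erase_of_mem hj, hJcard] at this
        omega
    unfold muL
    rw [hTeq, csInf_singleton]
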